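/- Let U be a positive definite real p×p matrix, let L ∈ ℒ_𝒟, and let D be a p×p diagonal matrix with nonzero diagonal entries. Then tr(L D^{-1} Lᵀ U) = Σ_{i=1}^p D_{ii}^{-1} [ (L_{<i|} + (U_{<i>})^{-1} U_{<i|})ᵀ U_{<i>} (L_{<i|} + (U_{<i>})^{-1} U_{<i|}) + U_{ii|<i>} ], where for indices i with pa(i) = ∅ the quadratic-form term is 0 and U_{ii|<i>} = U_{ii}. -/

import Mathlib

open MeasureTheory Matrix Real Finset

noncomputable section

/-- Index type for the free coordinates of a lower triangular matrix `L ∈ ℒ_𝒟`: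
a pair of a vertex `i` and a parent `j ∈ pa i`, standing for the entry `L j i`. -/
abbrev Edges {p : ℕ} (pa : Fin p → Finset (Fin p)) : Type := Σ i : Fin p, {j // j ∈ pa i}

/-- The matrix `L ∈ ℒ_𝒟` built from its free coordinates. -/
def mkL {p : ℕ} (pa : Fin p → Finset (Fin p)) (y : Edges pa → ℝ) :
    Matrix (Fin p) (Fin p) ℝ :=
  Matrix.of fun j i => if j = i then 1 else if h : j ∈ pa i then y ⟨i, j, h⟩ else 0

/-- `A_{<i>}`, the `pa(i) × pa(i)` submatrix of `A`. -/
def sub2 {p : ℕ} (pa : Fin p → Finset (Fin p)) (A : Matrix (Fin p) (Fin p) ℝ) (i : Fin p) :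
    Matrix {j // j ∈ pa i} {j // j ∈ pa i} ℝ :=
  A.submatrix (fun j => j.1) (fun j => j.1)

/-- `A_{<i|}`, the column vector `(A_{ji})_{j ∈ pa(i)}`. -/
def colv {p : ℕ} (pa : Fin p → Finset (Fin p)) (A : Matrix (Fin p) (Fin p) ℝ) (i : Fin p) :
    {j // j ∈ pa i} → ℝ :=
  fun j => A j.1 i

/-- `A_{[i>}`, the row vector `(A_{ij})_{j ∈ pa(i)}`. -/
def rowv {p : ℕ} (pa : Fin p → Finset (Fin p)) (A : Matrix (Fin p) (Fin p) ℝ) (i : Fin p) :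
    {j // j ∈ pa i} → ℝ :=
  fun j => A i j.1

/-- `A_{≤i≥}`, the `fa(i) × fa(i)` submatrix of `A`. -/
def subFam {p : ℕ} (pa : Fin p → Finset (Fin p)) (A : Matrix (Fin p) (Fin p) ℝ) (i : Fin p) :
    Matrix {j // j ∈ insert i (pa i)} {j // j ∈ insert i (pa i)} ℝ :=
  A.submatrix (fun j => j.1) (fun j => j.1)

/-- `A_{ii|<i>} = A_{ii} - A_{[i>} (A_{<i>})⁻¹ A_{<i|}` (equal to `A_{ii}` when `pa(i) = ∅`). -/
def condVar {p : ℕ} (pa : Fin p → Finset (Fin p)) (A : Matrix (Fin p) (Fin p) ℝ) (i : Fin p) :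
    ℝ :=
  A i i - rowv pa A i ⬝ᵥ ((sub2 pa A i)⁻¹ *ᵥ colv pa A i)

/-- The normalizing constant `z_𝒟(U, α)`. -/
def zD {p : ℕ} (pa : Fin p → Finset (Fin p)) (U : Matrix (Fin p) (Fin p) ℝ)
    (α : Fin p → ℝ) : ℝ :=
  ∏ i : Fin p,
    Real.Gamma (α i / 2 - ((pa i).card : ℝ) / 2 - 1) * (2 : ℝ) ^ (α i / 2 - 1) *
        Real.pi ^ (((pa i).card : ℝ) / 2) *
        (sub2 pa U i).det ^ (α i / 2 - ((pa i).card : ℝ) / 2 - 3 / 2) /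
      (subFam pa U i).det ^ (α i / 2 - ((pa i).card : ℝ) / 2 - 1)

/-- The unnormalized DAG-Wishart density on the Cholesky space `Θ_𝒟`. -/
def dagDensity {p : ℕ} (pa : Fin p → Finset (Fin p)) (U : Matrix (Fin p) (Fin p) ℝ)
    (α : Fin p → ℝ) (d : Fin p → ℝ) (L : Matrix (Fin p) (Fin p) ℝ) : ℝ :=
  Real.exp (-(1 / 2) * ((L * Matrix.diagonal (fun i => (d i)⁻¹) * Lᵀ) * U).trace) *
    ∏ i : Fin p, d i ^ (-(α i) / 2)

/-- The Cholesky space `Θ_𝒟` in free coordinates: diagonal coordinates positive. -/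
def thetaSet {p : ℕ} (pa : Fin p → Finset (Fin p)) :
    Set ((Fin p → ℝ) × (Edges pa → ℝ)) :=
  {x | ∀ i, 0 < x.1 i}

/-- The DAG-Wishart distribution `π_{U,α}^{Θ_𝒟}` as a measure on the free coordinates. -/
def dagWishart {p : ℕ} (pa : Fin p → Finset (Fin p)) (U : Matrix (Fin p) (Fin p) ℝ)
    (α : Fin p → ℝ) : Measure ((Fin p → ℝ) × (Edges pa → ℝ)) :=
  (volume.restrict (thetaSet pa)).withDensity
    (fun x => ENNReal.ofReal ((zD pa U α)⁻¹ * dagDensity pa U α x.1 (mkL pa x.2)))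


lemma sum_dite_aux {p : ℕ} (s : Finset (Fin p)) (x : {j // j ∈ s} → ℝ) (g : Fin p → ℝ) :
    ∑ b : Fin p, g b * (if h : b ∈ s then x ⟨b, h⟩ else 0) = ∑ b : {j // j ∈ s}, g b.1 * x b := by
  classical
  rw [← Finset.sum_subset (Finset.subset_univ s)
    (fun b _ hb => by simp [hb]),
    ← Finset.sum_attach s (fun b => g b * (if h : b ∈ s then x ⟨b, h⟩ else 0)),
    Finset.univ_eq_attach]
  exact Finset.sum_congr rfl fun b _ => by rw [dif_pos b.2]

lemma sub2_posDef {p : ℕ} (pa : Fin p → Finset (Fin p)) (U : Matrix (Fin p) (Fin p) ℝ)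
    (hU : U.PosDef) (i : Fin p) : (sub2 pa U i).PosDef := by
  classical
  rw [Matrix.posDef_iff_dotProduct_mulVec] at hU ⊢
  constructor
  · ext a b
    simpa [Matrix.conjTranspose_apply, sub2] using congrFun (congrFun hU.1 a.1) b.1
  · intro x hx
    set y : Fin p → ℝ := fun a => if h : a ∈ pa i then x ⟨a, h⟩ else 0 with hy_def
    have hy : y ≠ 0 := by
      obtain ⟨j, hj⟩ := Function.ne_iff.mp hx
      intro h0
      exact hj (by simpa [hy_def, dif_pos j.2] using congrFun h0 j.1)
    have hpos := hU.2 hy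
    have hmv : ∀ a : Fin p, (U *ᵥ y) a = ∑ b : {j // j ∈ pa i}, U a b.1 * x b := by
      intro a
      simpa [Matrix.mulVec, dotProduct, hy_def] using
        sum_dite_aux (pa i) x (fun b => U a b)
    have h2 : ∀ a : {j // j ∈ pa i}, (U *ᵥ y) a.1 * x a = x a * (sub2 pa U i *ᵥ x) a := by
      intro a
      rw [hmv]
      simp [sub2, Matrix.mulVec, dotProduct, mul_comm]
    have h1 : y ⬝ᵥ (U *ᵥ y) = ∑ a : Fin p, (U *ᵥ y) a * y a := by
      simp [dotProduct, mul_comm]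
    have hquad : y ⬝ᵥ (U *ᵥ y) = x ⬝ᵥ (sub2 pa U i *ᵥ x) := by
      rw [h1, sum_dite_aux (pa i) x (fun a => (U *ᵥ y) a)]
      simp_rw [h2]
      rfl
    have : (0:ℝ) < x ⬝ᵥ (sub2 pa U i *ᵥ x) := by rw [← hquad]; simpa using hpos
    simpa using this


/-- decomposition of `tr(L D⁻¹ Lᵀ U)` over vertices. -/
theorem stmt2 {p : ℕ} (hp : 1 ≤ p) (pa : Fin p → Finset (Fin p))
    (hpa : ∀ i : Fin p, ∀ j ∈ pa i, i < j)
    (U : Matrix (Fin p) (Fin p) ℝ) (hU : U.PosDef)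
    (L : Matrix (Fin p) (Fin p) ℝ) (hL1 : ∀ i, L i i = 1)
    (hL0 : ∀ i j : Fin p, j ≠ i → j ∉ pa i → L j i = 0)
    (d : Fin p → ℝ) (hd : ∀ i, d i ≠ 0) :
    ((L * Matrix.diagonal (fun i => (d i)⁻¹) * Lᵀ) * U).trace =
      ∑ i : Fin p, (d i)⁻¹ *
        ((colv pa L i + (sub2 pa U i)⁻¹ *ᵥ colv pa U i) ⬝ᵥ
            (sub2 pa U i *ᵥ (colv pa L i + (sub2 pa U i)⁻¹ *ᵥ colv pa U i)) +
          condVar pa U i) := by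
  classical
  have hsymm : ∀ a b : Fin p, U b a = U a b := fun a b => by
    simpa using congrFun (congrFun hU.1 a) b
  have hnotmem : ∀ i : Fin p, i ∉ pa i := fun i h => lt_irrefl i (hpa i i h)
  -- Step 1: trace as triple sum
  have hM : ∀ a b : Fin p, (L * Matrix.diagonal (fun i => (d i)⁻¹) * Lᵀ) a b
      = ∑ j : Fin p, L a j * (d j)⁻¹ * L b j := by
    intro a b
    rw [Matrix.mul_apply]
    refine Finset.sum_congr rfl fun j _ => ?_
    rw [Matrix.mul_diagonal, Matrix.transpose_apply]
  have tr_eq : ((L * Matrix.diagonal (fun i => (d i)⁻¹) * Lᵀ) * U).trace =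
      ∑ i : Fin p, (d i)⁻¹ * ∑ a : Fin p, ∑ b : Fin p, L a i * L b i * U b a := by
    calc ((L * Matrix.diagonal (fun i => (d i)⁻¹) * Lᵀ) * U).trace
        = ∑ a : Fin p, ∑ b : Fin p, ∑ j : Fin p, L a j * (d j)⁻¹ * L b j * U b a := by
          simp only [Matrix.trace, Matrix.diag]
          refine Finset.sum_congr rfl fun a _ => ?_
          rw [Matrix.mul_apply]
          refine Finset.sum_congr rfl fun b _ => ?_
          rw [hM, Finset.sum_mul]
      _ = ∑ j : Fin p, ∑ a : Fin p, ∑ b : Fin p, L a j * (d j)⁻¹ * L b j * U b a := by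
          rw [show (∑ a : Fin p, ∑ b : Fin p, ∑ j : Fin p, L a j * (d j)⁻¹ * L b j * U b a)
              = ∑ a : Fin p, ∑ j : Fin p, ∑ b : Fin p, L a j * (d j)⁻¹ * L b j * U b a from
            Finset.sum_congr rfl fun a _ => Finset.sum_comm]
          exact Finset.sum_comm
      _ = ∑ j : Fin p, (d j)⁻¹ * ∑ a : Fin p, ∑ b : Fin p, L a j * L b j * U b a := by
          refine Finset.sum_congr rfl fun j _ => ?_
          rw [Finset.mul_sum]
          refine Finset.sum_congr rfl fun a _ => ?_
          rw [Finset.mul_sum]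
          exact Finset.sum_congr rfl fun b _ => by ring
  rw [tr_eq]
  refine Finset.sum_congr rfl fun i _ => ?_
  congr 1
  -- per-vertex identity
  set S := sub2 pa U i with hS_def
  set ℓ := colv pa L i with hl_def
  set u := colv pa U i with hu_def
  have hSpd := sub2_posDef pa U hU i
  have hdet : IsUnit S.det := isUnit_iff_ne_zero.mpr hSpd.det_pos.ne'
  have hSsymm : Sᵀ = S := by
    ext a b
    simp only [Matrix.transpose_apply, hS_def, sub2, Matrix.submatrix_apply]
    exact hsymm a.1 b.1
  have hSβ : S *ᵥ (S⁻¹ *ᵥ u) = u := by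
    rw [Matrix.mulVec_mulVec, Matrix.mul_nonsing_inv _ hdet, Matrix.one_mulVec]
  set β := S⁻¹ *ᵥ u with hβ_def
  -- RHS expansion
  have hrow : rowv pa U i = u := by
    funext j
    exact hsymm j.1 i
  have hRHS : (ℓ + β) ⬝ᵥ (S *ᵥ (ℓ + β)) + condVar pa U i =
      ℓ ⬝ᵥ (S *ᵥ ℓ) + u ⬝ᵥ ℓ + ℓ ⬝ᵥ u + U i i := by
    rw [Matrix.mulVec_add, hSβ, dotProduct_add, add_dotProduct,
      add_dotProduct]
    have hβSl : β ⬝ᵥ (S *ᵥ ℓ) = u ⬝ᵥ ℓ := by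
      rw [Matrix.dotProduct_mulVec, ← Matrix.mulVec_transpose, hSsymm, hSβ]
    have hcv : condVar pa U i = U i i - u ⬝ᵥ β := by
      rw [condVar, hrow]
    rw [hβSl, hcv, dotProduct_comm β u]
    ring
  rw [hRHS]
  -- LHS: restrict the double sum
  have h1 : ∀ a : Fin p, ∑ b : Fin p, L a i * L b i * U b a =
      ∑ b ∈ insert i (pa i), L a i * L b i * U b a := by
    intro a
    refine (Finset.sum_subset (Finset.subset_univ _) fun b _ hb => ?_).symm
    rw [Finset.mem_insert] at hb
    push_neg at hb
    rw [hL0 i b hb.1 hb.2]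
    ring
  have h2 : ∑ a : Fin p, ∑ b ∈ insert i (pa i), L a i * L b i * U b a =
      ∑ a ∈ insert i (pa i), ∑ b ∈ insert i (pa i), L a i * L b i * U b a := by
    refine (Finset.sum_subset (Finset.subset_univ _) fun a _ ha => ?_).symm
    rw [Finset.mem_insert] at ha
    push_neg at ha
    rw [hL0 i a ha.1 ha.2]
    simp
  simp_rw [h1]
  rw [h2, Finset.sum_insert (hnotmem i)]
  simp_rw [Finset.sum_insert (hnotmem i)]
  rw [hL1 i]
  -- convert subtype dot products to Finset sums
  have hlu : ℓ ⬝ᵥ u = ∑ b ∈ pa i, L b i * U b i := by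
    rw [dotProduct, hl_def, hu_def, ← Finset.sum_coe_sort (pa i)
      (fun b => L b i * U b i)]
    rfl
  have hul : u ⬝ᵥ ℓ = ∑ b ∈ pa i, U b i * L b i := by
    rw [dotProduct, hl_def, hu_def, ← Finset.sum_coe_sort (pa i)
      (fun b => U b i * L b i)]
    rfl
  have hll : ℓ ⬝ᵥ (S *ᵥ ℓ) = ∑ a ∈ pa i, ∑ b ∈ pa i, L a i * (U a b * L b i) := by
    rw [dotProduct, ← Finset.sum_coe_sort (pa i)
      (fun a => ∑ b ∈ pa i, L a i * (U a b * L b i))]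
    refine Finset.sum_congr rfl fun a _ => ?_
    rw [Matrix.mulVec, dotProduct, Finset.mul_sum, ← Finset.sum_coe_sort (pa i)
      (fun b => L a.1 i * (U a.1 b * L b i))]
    rfl
  rw [hlu, hul, hll]
  simp only [Finset.sum_add_distrib]
  rw [Finset.sum_comm (s := pa i) (t := pa i)
    (f := fun a b => L a i * L b i * U b a)]
  have hd2 : ∑ b ∈ pa i, ∑ a ∈ pa i, L a i * L b i * U b a =
      ∑ a ∈ pa i, ∑ b ∈ pa i, L a i * (U a b * L b i) := by
    exact Finset.sum_congr rfl fun b _ => Finset.sum_congr rfl fun a _ => by ring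
  rw [hd2]
  have hcol : ∑ x ∈ pa i, L x i * 1 * U i x = ∑ b ∈ pa i, U b i * L b i := by
    refine Finset.sum_congr rfl fun a _ => ?_
    rw [← hsymm a i]
    ring
  have hcol2 : ∑ b ∈ pa i, 1 * L b i * U b i = ∑ b ∈ pa i, L b i * U b i :=
    Finset.sum_congr rfl fun b _ => by ring
  rw [hcol, hcol2]
  ring

end
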